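/- Let G be a finitely generated free group of rank n and suppose g ∈ G is such that the quotient G / ⟪g⟫ is a free group of rank n - 1. Then in the abelianization G^{ab} ≅ ℤ^n, the image of g is a primitive element (part of a ℤ-basis of ℤ^n). -/

import Mathlib

lemma keyLemma {M : Type*} [AddCommGroup M] {n : ℕ} (hn : 0 < n)
    (bM : Module.Basis (Fin n) ℤ M) (x : M)
    (bQ : Module.Basis (Fin (n-1)) ℤ (M ⧸ Submodule.span ℤ {x})) :
    ∃ B : Module.Basis (Fin n) ℤ M, B ⟨0, hn⟩ = x := by
  haveI := bM.isTorsionFree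
  obtain ⟨m, rfl⟩ : ∃ m, n = m + 1 := ⟨n - 1, (Nat.succ_pred_eq_of_pos hn).symm⟩
  have bQ' : Module.Basis (Fin m) ℤ (M ⧸ Submodule.span ℤ {x}) := bQ
  -- x ≠ 0
  have hx : x ≠ 0 := by
    rintro rfl
    have e : (M ⧸ Submodule.span ℤ ({0} : Set M)) ≃ₗ[ℤ] M := by
      rw [Submodule.span_zero_singleton]
      exact Submodule.quotEquivOfEqBot ⊥ rfl
    have := mk_eq_mk_of_basis (bQ'.map e) bM
    simp only [Cardinal.mk_fin, Cardinal.lift_natCast, Nat.cast_inj] at this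
    omega
  -- lifts of the quotient basis
  choose y hy using fun i => (Submodule.span ℤ {x}).mkQ_surjective (bQ' i)
  set v : Fin (m+1) → M := Fin.cases x y with hv
  have hmkx : (Submodule.span ℤ {x}).mkQ x = 0 := by
    rw [Submodule.mkQ_apply]
    exact (Submodule.Quotient.mk_eq_zero _).2 (Submodule.mem_span_singleton_self x)
  have hli : LinearIndependent ℤ v := by
    rw [Fintype.linearIndependent_iff]
    intro c hc
    have hc' : (Submodule.span ℤ {x}).mkQ
        (∑ i, c i • v i) = 0 := by rw [hc]; simp
    rw [map_sum] at hc'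
    simp only [map_smul] at hc'
    rw [Fin.sum_univ_succ] at hc'
    simp only [hv, Fin.cases_zero, Fin.cases_succ, hmkx, smul_zero, zero_add, hy] at hc'
    have hcs : ∀ i : Fin m, c i.succ = 0 :=
      Fintype.linearIndependent_iff.mp bQ'.linearIndependent _ hc'
    have hc0 : c 0 = 0 := by
      have := hc
      rw [Fin.sum_univ_succ] at this
      simp only [hv, Fin.cases_zero, Fin.cases_succ] at this
      simp only [hcs, zero_smul, Finset.sum_const_zero, add_zero] at this
      rcases smul_eq_zero.mp this with h | h
      · exact_mod_cast h
      · exact absurd h hx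
    intro i
    refine Fin.cases hc0 hcs i
  have hsp : ⊤ ≤ Submodule.span ℤ (Set.range v) := by
    intro p _
    have hrep := bQ'.sum_repr ((Submodule.span ℤ {x}).mkQ p)
    set q : M := ∑ i, bQ'.repr ((Submodule.span ℤ {x}).mkQ p) i • y i with hq
    have hpq : (Submodule.span ℤ {x}).mkQ (p - q) = 0 := by
      rw [map_sub, hq, map_sum]
      simp only [map_smul, hy]
      rw [hrep]; simp
    have hpq' : p - q ∈ Submodule.span ℤ {x} := by
      rw [← Submodule.Quotient.mk_eq_zero, ← Submodule.mkQ_apply]; exact hpq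
    obtain ⟨c, hcx⟩ := Submodule.mem_span_singleton.mp hpq'
    have hp : p = c • x + q := by rw [hcx]; abel
    rw [hp]
    refine Submodule.add_mem _ (Submodule.smul_mem _ _ ?_) (Submodule.sum_mem _ fun i _ =>
      Submodule.smul_mem _ _ ?_)
    · exact Submodule.subset_span ⟨0, rfl⟩
    · exact Submodule.subset_span ⟨i.succ, rfl⟩
  refine ⟨Module.Basis.mk hli hsp, ?_⟩
  rw [Module.Basis.mk_apply]
  show v 0 = x
  simp [hv]

/-- transfer a multiplicative equivalence to the additive tags -/
def addEquivOfMulEquiv {A B : Type*} [MulOneClass A] [MulOneClass B] (e : A ≃* B) :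
    Additive A ≃+ Additive B where
  toFun a := Additive.ofMul (e a.toMul)
  invFun b := Additive.ofMul (e.symm b.toMul)
  left_inv a := by simp
  right_inv b := by simp
  map_add' a b := congrArg Additive.ofMul (map_mul e _ _)

lemma abelianization_of_surjective {H : Type*} [Group H] :
    Function.Surjective (Abelianization.of : H → Abelianization H) := fun a =>
  QuotientGroup.induction_on a fun b => ⟨b, rfl⟩

/-- If `G` is free of rank `n` and `G / ⟪g⟫` is free of rank `n - 1`, then the image
of `g` in the abelianization `G^{ab} ≅ ℤⁿ` is a primitive element, i.e. part of a
ℤ-basis of the abelianization. -/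
theorem stmt7 (G : Type*) [Group G] (n : ℕ) (hn : 0 < n) (g : G)
    (hfree : ∃ z : Fin n → G, Function.Bijective (FreeGroup.lift z))
    (hquot : Nonempty ((G ⧸ Subgroup.normalClosure {g}) ≃* FreeGroup (Fin (n - 1)))) :
    ∃ B : Module.Basis (Fin n) ℤ (Additive (Abelianization G)),
      B ⟨0, hn⟩ = Additive.ofMul (Abelianization.of g) := by
  classical
  obtain ⟨z, hz⟩ := hfree
  obtain ⟨eq⟩ := hquot
  set N := Subgroup.normalClosure ({g} : Set G) with hN
  have e1 : FreeGroup (Fin n) ≃* G := MulEquiv.ofBijective (FreeGroup.lift z) hz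
  let eM : FreeAbelianGroup (Fin n) ≃+ Additive (Abelianization G) :=
    addEquivOfMulEquiv e1.abelianizationCongr
  let bM : Module.Basis (Fin n) ℤ (Additive (Abelianization G)) :=
    (FreeAbelianGroup.basis (Fin n)).map eM.toIntLinearEquiv
  set x : Additive (Abelianization G) := Additive.ofMul (Abelianization.of g) with hx
  set S : Submodule ℤ (Additive (Abelianization G)) := Submodule.span ℤ {x} with hS
  -- forward map
  let h1 : Additive (Abelianization G) →+ Additive (Abelianization (G ⧸ N)) :=
    MonoidHom.toAdditive (Abelianization.map (QuotientGroup.mk' N))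
  have hker : S ≤ LinearMap.ker h1.toIntLinearMap := by
    rw [hS, Submodule.span_le, Set.singleton_subset_iff]
    show h1 x = 0
    have hg : (QuotientGroup.mk' N) g = 1 := by
      rw [QuotientGroup.mk'_apply, QuotientGroup.eq_one_iff]
      exact Subgroup.subset_normalClosure (Set.mem_singleton g)
    show Additive.ofMul (Abelianization.map (QuotientGroup.mk' N) (Abelianization.of g)) = 0
    rw [Abelianization.map_of, hg, map_one]
    rfl
  let f1 : (Additive (Abelianization G) ⧸ S) →ₗ[ℤ] Additive (Abelianization (G ⧸ N)) :=
    Submodule.liftQ S h1.toIntLinearMap hker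
  -- backward map
  let ψ : G →* Multiplicative (Additive (Abelianization G) ⧸ S) :=
    AddMonoidHom.toMultiplicativeRight
      (S.mkQ.toAddMonoidHom.comp (MonoidHom.toAdditive (Abelianization.of (G := G))))
  have hψg : ψ g = 1 := by
    show Multiplicative.ofAdd (S.mkQ x) = 1
    have hx0 : S.mkQ x = 0 := by
      rw [Submodule.mkQ_apply]
      exact (Submodule.Quotient.mk_eq_zero _).2 (Submodule.mem_span_singleton_self x)
    rw [hx0]; rfl
  have hNker : N ≤ ψ.ker := by
    rw [hN]
    exact Subgroup.normalClosure_le_normal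
      (Set.singleton_subset_iff.2 (by simpa [MonoidHom.mem_ker] using hψg))
  let ψ' : (G ⧸ N) →* Multiplicative (Additive (Abelianization G) ⧸ S) :=
    QuotientGroup.lift N ψ hNker
  let f2 : Additive (Abelianization (G ⧸ N)) →+ (Additive (Abelianization G) ⧸ S) :=
    MonoidHom.toAdditiveLeft (Abelianization.lift ψ')
  -- pointwise computations
  have hf1 : ∀ b : G, f1 (S.mkQ (Additive.ofMul (Abelianization.of b)))
      = Additive.ofMul (Abelianization.of (QuotientGroup.mk (s := N) b)) := by
    intro b
    show h1 (Additive.ofMul (Abelianization.of b)) = _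
    show Additive.ofMul (Abelianization.map (QuotientGroup.mk' N) (Abelianization.of b)) = _
    rw [Abelianization.map_of]
    rfl
  have hf2 : ∀ b : G, f2 (Additive.ofMul (Abelianization.of (QuotientGroup.mk (s := N) b)))
      = S.mkQ (Additive.ofMul (Abelianization.of b)) := by
    intro b
    show Additive.ofMul ((Abelianization.lift ψ') (Abelianization.of (QuotientGroup.mk (s := N) b))) = _
    rw [Abelianization.lift_apply_of]
    rfl
  have hleft : ∀ q, f2.toIntLinearMap (f1 q) = q := by
    intro q
    obtain ⟨p, rfl⟩ := S.mkQ_surjective q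
    obtain ⟨b, hb⟩ := abelianization_of_surjective p.toMul
    have hp : p = Additive.ofMul (Abelianization.of b) := (congrArg Additive.ofMul hb).symm
    rw [hp, hf1]
    simp only [AddMonoidHom.coe_toIntLinearMap]
    exact hf2 b
  have hright : ∀ a, f1 (f2.toIntLinearMap a) = a := by
    intro a
    obtain ⟨c, hc⟩ := abelianization_of_surjective a.toMul
    obtain ⟨b, rfl⟩ := QuotientGroup.mk'_surjective N c
    have ha : a = Additive.ofMul (Abelianization.of (QuotientGroup.mk (s := N) b)) :=
      (congrArg Additive.ofMul hc).symm
    rw [ha]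
    simp only [AddMonoidHom.coe_toIntLinearMap]
    rw [hf2, hf1]
  let eQ : (Additive (Abelianization G) ⧸ S) ≃ₗ[ℤ] Additive (Abelianization (G ⧸ N)) :=
    LinearEquiv.ofLinear f1 f2.toIntLinearMap (LinearMap.ext hright) (LinearMap.ext hleft)
  let eQ2 : FreeAbelianGroup (Fin (n-1)) ≃+ Additive (Abelianization (G ⧸ N)) :=
    addEquivOfMulEquiv eq.abelianizationCongr.symm
  let bQ : Module.Basis (Fin (n-1)) ℤ (Additive (Abelianization G) ⧸ S) :=
    ((FreeAbelianGroup.basis (Fin (n-1))).map eQ2.toIntLinearEquiv).map eQ.symm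
  obtain ⟨B, hB⟩ := keyLemma hn bM x bQ
  exact ⟨B, hB⟩
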